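/- For every integer L ≥ 2, the function f(R) := (R − R^L)/(1 − R^L) is concave on the interval [0,1). -/

import Mathlib

private lemma stmt2_pairing (K : ℕ) (x : ℝ) (h0 : 0 ≤ x) (h1 : x ≤ 1) :
    2 * ∑ j ∈ Finset.range (K+1), x^(j+1) ≤ (K+1) * (1 + x^(K+2)) := by
  have hrefl : ∑ j ∈ Finset.range (K+1), x^(K+1-j) = ∑ j ∈ Finset.range (K+1), x^(j+1) := by
    rw [← Finset.sum_range_reflect]
    apply Finset.sum_congr rfl
    intro j hj
    simp only [Finset.mem_range] at hj
    congr 1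
    omega
  have hterm : ∀ j ∈ Finset.range (K+1), x^(j+1) + x^(K+1-j) ≤ 1 + x^(K+2) := by
    intro j hj
    simp only [Finset.mem_range] at hj
    have h2 : x^(j+1) * x^(K+1-j) = x^(K+2) := by
      rw [← pow_add]; congr 1; omega
    have hA : x^(j+1) ≤ 1 := pow_le_one₀ h0 h1
    have hB : x^(K+1-j) ≤ 1 := pow_le_one₀ h0 h1
    nlinarith [mul_nonneg h0 h0]
  calc 2 * ∑ j ∈ Finset.range (K+1), x^(j+1)
      = ∑ j ∈ Finset.range (K+1), (x^(j+1) + x^(K+1-j)) := by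
        rw [Finset.sum_add_distrib, hrefl]; ring
    _ ≤ ∑ _j ∈ Finset.range (K+1), (1 + x^(K+2)) := Finset.sum_le_sum hterm
    _ = (K+1) * (1 + x^(K+2)) := by
        rw [Finset.sum_const, Finset.card_range]; ring

private lemma stmt2_key (K : ℕ) (x : ℝ) (h0 : 0 ≤ x) (h1 : x ≤ 1) :
    (1 - x^(K+2)) * ((K+3)*x - (K+1)) ≤ 2*(K+2)*x^(K+2)*(1-x) := by
  set T : ℝ := ∑ j ∈ Finset.range (K+1), x^(j+1) with hT
  have hkey : 2 * T ≤ (K+1) * (1 + x^(K+2)) := stmt2_pairing K x h0 h1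
  have hgeom : (1 - x) * T = x - x^(K+2) := by
    have h := geom_sum_mul x (K+1)
    have hT' : T = x * ∑ j ∈ Finset.range (K+1), x^j := by
      rw [hT, Finset.mul_sum]
      exact Finset.sum_congr rfl fun j _ => by ring
    rw [hT']
    linear_combination (-x) * h
  have h3 : (1-x) * (2*T) ≤ (1-x) * ((K+1) * (1 + x^(K+2))) :=
    mul_le_mul_of_nonneg_left hkey (by linarith)
  nlinarith [hgeom, h3]


/-- For every integer `L ≥ 2`, the function
`f(R) = (R - R^L)/(1 - R^L)` is concave on `[0,1)`. -/
theorem stmt_2 (L : ℕ) (hL : 2 ≤ L) :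
    ConcaveOn ℝ (Set.Ico (0:ℝ) 1) (fun x : ℝ => (x - x^L) / (1 - x^L)) := by
  obtain ⟨K, rfl⟩ : ∃ K, L = K + 2 := ⟨L - 2, by omega⟩
  set F1 : ℝ → ℝ := fun x =>
    ((1 - (K+2)*x^(K+1)) * (1 - x^(K+2)) - (x - x^(K+2)) * (0 - (K+2)*x^(K+1)))
      / (1 - x^(K+2))^2 with hF1
  set F2 : ℝ → ℝ := fun x =>
    ((K+2) * x^K * (1 - x^(K+2)) *
      ((1 - x^(K+2)) * ((K+3)*x - (K+1)) - 2*(K+2)*x^(K+2)*(1-x)))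
      / ((1 - x^(K+2))^2)^2 with hF2
  have hne : ∀ x : ℝ, x ∈ Set.Ico (0:ℝ) 1 → (1:ℝ) - x^(K+2) ≠ 0 := by
    intro x hx
    have : x^(K+2) < 1 := pow_lt_one₀ hx.1 hx.2 (by omega)
    linarith
  have hint : interior (Set.Ico (0:ℝ) 1) = Set.Ioo (0:ℝ) 1 := interior_Ico
  have hpow2 : ∀ x : ℝ, HasDerivAt (fun y : ℝ => y^(K+2)) ((K+2)*x^(K+1)) x := by
    intro x; simpa using hasDerivAt_pow (K+2) x
  have hpow1 : ∀ x : ℝ, HasDerivAt (fun y : ℝ => y^(K+1)) ((K+1)*x^K) x := by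
    intro x; simpa using hasDerivAt_pow (K+1) x
  have hnum : ∀ x : ℝ, HasDerivAt (fun y : ℝ => y - y^(K+2)) (1 - (K+2)*x^(K+1)) x := by
    intro x; exact (hasDerivAt_id x).sub (hpow2 x)
  have hden : ∀ x : ℝ, HasDerivAt (fun y : ℝ => 1 - y^(K+2)) (0 - (K+2)*x^(K+1)) x := by
    intro x; exact (hasDerivAt_const x 1).sub (hpow2 x)
  apply concaveOn_of_hasDerivWithinAt2_nonpos (f' := F1) (f'' := F2) (convex_Ico 0 1)
  · -- continuity
    apply ContinuousOn.div
    · fun_prop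
    · fun_prop
    · exact hne
  · -- first derivative
    intro x hx
    rw [hint] at hx
    have hx' : x ∈ Set.Ico (0:ℝ) 1 := ⟨hx.1.le, hx.2⟩
    exact (((hnum x).div (hden x) (hne x hx')).hasDerivWithinAt)
  · -- second derivative
    intro x hx
    rw [hint] at hx
    have hx' : x ∈ Set.Ico (0:ℝ) 1 := ⟨hx.1.le, hx.2⟩
    have hW : HasDerivAt (fun y : ℝ =>
        (1 - (K+2)*y^(K+1)) * (1 - y^(K+2)) - (y - y^(K+2)) * (0 - (K+2)*y^(K+1)))
        (((0 - (K+2)*((K+1)*x^K)) * (1 - x^(K+2)) +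
          (1 - (K+2)*x^(K+1)) * (0 - (K+2)*x^(K+1))) -
         ((1 - (K+2)*x^(K+1)) * (0 - (K+2)*x^(K+1)) +
          (x - x^(K+2)) * (0 - (K+2)*((K+1)*x^K)))) x := by
      exact (( (hasDerivAt_const x 1).sub ((hpow1 x).const_mul _) ).mul (hden x)).sub
        ((hnum x).mul ((hasDerivAt_const x 0).sub ((hpow1 x).const_mul _)))
    have hD : HasDerivAt (fun y : ℝ => (1 - y^(K+2))^2)
        (2 * (1 - x^(K+2))^1 * (0 - (K+2)*x^(K+1))) x := by
      simpa using (hden x).fun_pow 2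
    have hd2 : HasDerivAt F1 (F2 x) x := by
      have h := hW.fun_div hD (pow_ne_zero 2 (hne x hx'))
      refine h.congr_deriv ?_
      rw [hF2]
      field_simp
      ring
    exact hd2.hasDerivWithinAt
  · -- nonpositivity
    intro x hx
    rw [hint] at hx
    have hx' : x ∈ Set.Ico (0:ℝ) 1 := ⟨hx.1.le, hx.2⟩
    rw [hF2]
    apply div_nonpos_of_nonpos_of_nonneg _ (by positivity)
    apply mul_nonpos_of_nonneg_of_nonpos
    · have h1 : (0:ℝ) ≤ x^K := pow_nonneg hx.1.le K
      have h2 : x^(K+2) ≤ 1 := (pow_lt_one₀ hx.1.le hx.2 (by omega)).le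
      have h3 : (0:ℝ) ≤ (K:ℝ)+2 := by positivity
      have h4 : (0:ℝ) ≤ 1 - x^(K+2) := by linarith
      exact mul_nonneg (mul_nonneg h3 h1) h4
    · have := stmt2_key K x hx.1.le hx.2.le
      linarith
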